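/- (Noise rate condition: small error of the hinge minimizer under empirical dense pancakes.) Let d, k, n be positive integers with k ≥ 2, let C, σ, γ, τ > 0 with γ/4 > max(τ, Cσ), let η ≤ 1/(2^{12}·k²), α ∈ [0.6/k, 1/k] and ε ∈ (0,1). Let w* ∈ ℝ^{kd} with ‖w*‖₂ ≤ 1. Let I be a finite index set with |I| ≥ n/2 and |I| ≤ n, partitioned into a clean part Cl and a dirty part D with samples (x_i, y_i) ∈ ℝ^d × {1,…,k}, such that: (i) for every i ∈ Cl and every y' ≠ y_i, ⟨w*_{y_i} − w*_{y'}, x_i⟩ ≥ γ; (ii) |D| ≤ ηn, and there exist centers μ_i ∈ ℝ^d (i ∈ D) with ⟨w*_{y_i} − w*_{y'}, μ_i⟩ ≥ γ for every y' ≠ y_i, and ‖Σ_{i∈T}(x_i − μ_i)‖₂ ≤ C·σ·√(|T|·n) for every subset T ⊆ D. Let ŵ be a minimizer of w ↦ Σ_{i∈I} ℓ_γ(w;(x_i,y_i)) over the closed unit ball of ℝ^{kd}. Let μ be a probability measure on ℝ^d × {1,…,k} such that μ( { (x,y) : |{ i ∈ Cl : (x_i,y_i) ∈ P_ŵ^τ(x,y)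 }| ≥ (3α/20)·|I| } ) ≥ 1 − ε. Then μ( { (x,y) : there exists y' ∈ {1,…,k} with ⟨ŵ_{y'}, x⟩ > ⟨ŵ_y, x⟩ } ) ≤ ε; that is, the probability that ŵ misclassifies a point drawn from μ is at most ε. -/

import Mathlib

open scoped BigOperators RealInnerProductSpace
open Finset

/-- The class-sensitive feature map `Ψ : ℝ^d × {1,…,k} → ℝ^{kd}`: the `y`-th block of
`d` coordinates of `Psi d k x y` equals `x`, the remaining coordinates are zero. -/
noncomputable def Psi (d k : ℕ) (x : EuclideanSpace ℝ (Fin d)) (y : Fin k) :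
    EuclideanSpace ℝ (Fin k × Fin d) :=
  WithLp.toLp 2 (fun p : Fin k × Fin d => if p.1 = y then x p.2 else 0)

/-- The `y`-th block `w_y ∈ ℝ^d` of a vector `w ∈ ℝ^{kd}`. -/
noncomputable def block (d k : ℕ) (w : EuclideanSpace ℝ (Fin k × Fin d)) (y : Fin k) :
    EuclideanSpace ℝ (Fin d) :=
  WithLp.toLp 2 (fun j => w (y, j))

/-- The multiclass pancake `P_w^τ(x,y)`: pairs `(x',y')` with `y' = y` and
`|⟨w_ȳ, x' − x⟩| ≤ τ` for every label `ȳ`. -/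
def pancake (d k : ℕ) (w : EuclideanSpace ℝ (Fin k × Fin d)) (τ : ℝ)
    (x : EuclideanSpace ℝ (Fin d)) (y : Fin k) :
    Set (EuclideanSpace ℝ (Fin d) × Fin k) :=
  {p | p.2 = y ∧ ∀ ybar : Fin k, |⟪block d k w ybar, p.1 - x⟫| ≤ τ}

/-- The γ-scaled multiclass hinge loss
`ℓ_γ(w;(x,y)) = max_{y'} (1[y' ≠ y] − (1/γ)·⟨w, Ψ(x,y) − Ψ(x,y')⟩)`. -/
noncomputable def hinge (d k : ℕ) [NeZero k] (γ : ℝ)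
    (w : EuclideanSpace ℝ (Fin k × Fin d)) (x : EuclideanSpace ℝ (Fin d)) (y : Fin k) : ℝ :=
  Finset.univ.sup' Finset.univ_nonempty
    (fun y' : Fin k => (if y' ≠ y then (1:ℝ) else 0) - (1/γ) * ⟪w, Psi d k x y - Psi d k x y'⟫)

lemma inner_Psi (d k : ℕ) (w : EuclideanSpace ℝ (Fin k × Fin d))
    (x : EuclideanSpace ℝ (Fin d)) (y : Fin k) :
    ⟪w, Psi d k x y⟫ = ⟪block d k w y, x⟫ := by
  simp only [PiLp.inner_apply, RCLike.inner_apply, conj_trivial]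
  rw [Fintype.sum_prod_type]
  simp [Psi, block, Finset.sum_ite_eq, mul_ite]

lemma hinge_term (d k : ℕ) [NeZero k] (γ : ℝ) (w : EuclideanSpace ℝ (Fin k × Fin d))
    (x : EuclideanSpace ℝ (Fin d)) (y y' : Fin k) :
    (if y' ≠ y then (1:ℝ) else 0) - (1/γ) * ⟪w, Psi d k x y - Psi d k x y'⟫
      = (if y' ≠ y then (1:ℝ) else 0)
        - (1/γ) * (⟪block d k w y, x⟫ - ⟪block d k w y', x⟫) := by
  rw [inner_sub_right, inner_Psi, inner_Psi]

lemma le_hinge (d k : ℕ) [NeZero k] (γ : ℝ) (w : EuclideanSpace ℝ (Fin k × Fin d))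
    (x : EuclideanSpace ℝ (Fin d)) (y y' : Fin k) :
    (if y' ≠ y then (1:ℝ) else 0)
        - (1/γ) * (⟪block d k w y, x⟫ - ⟪block d k w y', x⟫) ≤ hinge d k γ w x y := by
  rw [← hinge_term]
  exact Finset.le_sup' (fun y' : Fin k => (if y' ≠ y then (1:ℝ) else 0) - (1/γ) * ⟪w, Psi d k x y - Psi d k x y'⟫) (Finset.mem_univ y')

lemma hinge_nonneg (d k : ℕ) [NeZero k] (γ : ℝ) (w : EuclideanSpace ℝ (Fin k × Fin d))
    (x : EuclideanSpace ℝ (Fin d)) (y : Fin k) : 0 ≤ hinge d k γ w x y := by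
  have := le_hinge d k γ w x y y
  simpa using this

lemma hinge_le (d k : ℕ) [NeZero k] (γ : ℝ) (w : EuclideanSpace ℝ (Fin k × Fin d))
    (x : EuclideanSpace ℝ (Fin d)) (y : Fin k) (a : ℝ)
    (h : ∀ y' : Fin k, (if y' ≠ y then (1:ℝ) else 0)
        - (1/γ) * (⟪block d k w y, x⟫ - ⟪block d k w y', x⟫) ≤ a) :
    hinge d k γ w x y ≤ a := by
  apply Finset.sup'_le
  intro y' _
  rw [hinge_term]
  exact h y'
lemma sum_block_sq (d k : ℕ) (w : EuclideanSpace ℝ (Fin k × Fin d)) :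
    ∑ a : Fin k, ‖block d k w a‖^2 = ‖w‖^2 := by
  have h1 : ∀ a : Fin k, ‖block d k w a‖^2 = ∑ j : Fin d, (w (a, j))^2 := by
    intro a
    rw [EuclideanSpace.norm_eq, Real.sq_sqrt (by positivity)]
    simp [block, sq_abs]
  have h2 : ‖w‖^2 = ∑ p : Fin k × Fin d, (w p)^2 := by
    rw [EuclideanSpace.norm_eq, Real.sq_sqrt (by positivity)]
    simp [sq_abs]
  rw [h2, Fintype.sum_prod_type]
  simp [h1]

lemma fiber_bound {ι : Type*} [DecidableEq ι] (d k n : ℕ)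
    (wstar : EuclideanSpace ℝ (Fin k × Fin d)) (hwstar : ‖wstar‖ ≤ 1)
    (D : Finset ι) (v : ι → EuclideanSpace ℝ (Fin d)) (B : ℝ) (hB : 0 ≤ B)
    (hdev : ∀ T ⊆ D, ‖∑ i ∈ T, v i‖ ≤ B * Real.sqrt (T.card * n))
    (g : ι → Fin k) :
    ∑ i ∈ D, ⟪block d k wstar (g i), v i⟫ ≤ B * Real.sqrt n * Real.sqrt D.card := by
  classical
  have hfib : ∑ i ∈ D, ⟪block d k wstar (g i), v i⟫
      = ∑ a : Fin k, ∑ i ∈ D.filter (fun i => g i = a), ⟪block d k wstar a, v i⟫ := by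
    rw [← Finset.sum_fiberwise_of_maps_to (fun i _ => Finset.mem_univ (g i))
      (fun i => ⟪block d k wstar (g i), v i⟫)]
    refine Finset.sum_congr rfl fun a _ => Finset.sum_congr rfl fun i hi => ?_
    rw [(Finset.mem_filter.mp hi).2]
  rw [hfib]
  have step1 : ∀ a : Fin k, ∑ i ∈ D.filter (fun i => g i = a), ⟪block d k wstar a, v i⟫
      ≤ ‖block d k wstar a‖ * (B * Real.sqrt n * Real.sqrt ((D.filter (fun i => g i = a)).card)) := by
    intro a
    rw [← inner_sum]
    calc ⟪block d k wstar a, ∑ i ∈ D.filter (fun i => g i = a), v i⟫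
        ≤ ‖block d k wstar a‖ * ‖∑ i ∈ D.filter (fun i => g i = a), v i‖ :=
          real_inner_le_norm _ _
      _ ≤ ‖block d k wstar a‖ * (B * Real.sqrt n * Real.sqrt ((D.filter (fun i => g i = a)).card)) := by
          refine mul_le_mul_of_nonneg_left ?_ (norm_nonneg _)
          have := hdev (D.filter (fun i => g i = a)) (Finset.filter_subset _ D)
          calc ‖∑ i ∈ D.filter (fun i => g i = a), v i‖
              ≤ B * Real.sqrt ((D.filter (fun i => g i = a)).card * n) := this
            _ = B * Real.sqrt n * Real.sqrt ((D.filter (fun i => g i = a)).card) := by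
                rw [Real.sqrt_mul (by positivity)]; ring
  calc ∑ a : Fin k, ∑ i ∈ D.filter (fun i => g i = a), ⟪block d k wstar a, v i⟫
      ≤ ∑ a : Fin k, ‖block d k wstar a‖ * (B * Real.sqrt n * Real.sqrt ((D.filter (fun i => g i = a)).card)) :=
        Finset.sum_le_sum fun a _ => step1 a
    _ = (B * Real.sqrt n) * ∑ a : Fin k, ‖block d k wstar a‖ * Real.sqrt ((D.filter (fun i => g i = a)).card) := by
        rw [Finset.mul_sum]; congr 1; ext a; ring
    _ ≤ (B * Real.sqrt n) * Real.sqrt D.card := by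
        refine mul_le_mul_of_nonneg_left ?_ (by positivity)
        calc ∑ a : Fin k, ‖block d k wstar a‖ * Real.sqrt ((D.filter (fun i => g i = a)).card)
            ≤ Real.sqrt (∑ a : Fin k, ‖block d k wstar a‖^2)
              * Real.sqrt (∑ a : Fin k, (Real.sqrt ((D.filter (fun i => g i = a)).card))^2) :=
              Real.sum_mul_le_sqrt_mul_sqrt _ _ _
          _ ≤ Real.sqrt D.card := by
              have hb : ∑ a : Fin k, ‖block d k wstar a‖^2 ≤ 1 := by
                rw [sum_block_sq]
                nlinarith [norm_nonneg wstar]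
              have hc : ∑ a : Fin k, (Real.sqrt ((D.filter (fun i => g i = a)).card))^2
                  = (D.card : ℝ) := by
                have := Finset.card_eq_sum_card_fiberwise (f := g) (s := D) (t := Finset.univ)
                  (fun i _ => Finset.mem_univ (g i))
                rw [this]
                push_cast
                refine Finset.sum_congr rfl fun a _ => ?_
                rw [Real.sq_sqrt (by positivity)]
              rw [hc]
              calc Real.sqrt (∑ a : Fin k, ‖block d k wstar a‖^2) * Real.sqrt (D.card)
                  ≤ 1 * Real.sqrt (D.card) := by
                    refine mul_le_mul_of_nonneg_right ?_ (Real.sqrt_nonneg _)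
                    calc Real.sqrt (∑ a : Fin k, ‖block d k wstar a‖^2) ≤ Real.sqrt 1 :=
                        Real.sqrt_le_sqrt hb
                      _ = 1 := Real.sqrt_one
                _ = Real.sqrt (D.card) := one_mul _

lemma dirty_sum {ι : Type*} [DecidableEq ι] (d k n : ℕ) [NeZero k] (γ C σ : ℝ)
    (hγ : 0 < γ) (hCσ : 0 ≤ C * σ)
    (wstar : EuclideanSpace ℝ (Fin k × Fin d)) (hwstar : ‖wstar‖ ≤ 1)
    (D : Finset ι) (x μc : ι → EuclideanSpace ℝ (Fin d)) (y : ι → Fin k)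
    (hDmargin : ∀ i ∈ D, ∀ y' : Fin k, y' ≠ y i →
      γ ≤ ⟪block d k wstar (y i) - block d k wstar y', μc i⟫)
    (hDdev : ∀ T ⊆ D, ‖∑ i ∈ T, (x i - μc i)‖ ≤ C * σ * Real.sqrt (T.card * n)) :
    ∑ i ∈ D, hinge d k γ wstar (x i) (y i)
      ≤ (1/γ) * (2 * (C * σ) * Real.sqrt n * Real.sqrt D.card) := by
  classical
  haveI : Inhabited (Fin k) := ⟨⟨0, Nat.pos_of_ne_zero (NeZero.ne k)⟩⟩
  have hch : ∀ i ∈ D, ∃ b : Fin k, hinge d k γ wstar (x i) (y i)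
      ≤ (1/γ) * (⟪block d k wstar (y i), μc i - x i⟫ + ⟪block d k wstar b, x i - μc i⟫) := by
    intro i hi
    obtain ⟨b, -, hb⟩ := Finset.exists_mem_eq_sup' (Finset.univ_nonempty (α := Fin k))
      (fun y' : Fin k => (if y' ≠ y i then (1:ℝ) else 0)
        - (1/γ) * ⟪wstar, Psi d k (x i) (y i) - Psi d k (x i) y'⟫)
    refine ⟨b, ?_⟩
    have heq : hinge d k γ wstar (x i) (y i)
        = (if b ≠ y i then (1:ℝ) else 0)
          - (1/γ) * (⟪block d k wstar (y i), x i⟫ - ⟪block d k wstar b, x i⟫) := by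
      rw [hinge, hb, inner_sub_right, inner_Psi, inner_Psi]
    rw [heq, inner_sub_right, inner_sub_right]
    by_cases hby : b = y i
    · simp [hby]
    · have hm := hDmargin i hi b hby
      rw [inner_sub_left] at hm
      have hinv : (1/γ) * γ = 1 := by field_simp
      have hγ' : 0 ≤ 1/γ := by positivity
      simp only [ne_eq, hby, not_false_iff, if_true]
      have key : 1 ≤ 1/γ * (⟪block d k wstar (y i), μc i⟫ - ⟪block d k wstar b, μc i⟫) := by
        have key0 := mul_le_mul_of_nonneg_left hm hγ'
        rwa [hinv] at key0
      nlinarith [key]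
  choose! c hc using hch
  have hsum : ∑ i ∈ D, hinge d k γ wstar (x i) (y i)
      ≤ (1/γ) * ((∑ i ∈ D, ⟪block d k wstar (y i), μc i - x i⟫)
        + ∑ i ∈ D, ⟪block d k wstar (c i), x i - μc i⟫) := by
    rw [mul_add, Finset.mul_sum, Finset.mul_sum, ← Finset.sum_add_distrib]
    refine Finset.sum_le_sum fun i hi => ?_
    have := hc i hi
    linarith [this]
  have hb1 : ∑ i ∈ D, ⟪block d k wstar (y i), μc i - x i⟫
      ≤ C * σ * Real.sqrt n * Real.sqrt D.card := by
    refine fiber_bound d k n wstar hwstar D (fun i => μc i - x i) (C*σ) hCσ ?_ y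
    intro T hT
    have : ∑ i ∈ T, (μc i - x i) = -∑ i ∈ T, (x i - μc i) := by
      rw [← Finset.sum_neg_distrib]
      exact Finset.sum_congr rfl fun i _ => by abel
    rw [this, norm_neg]
    exact hDdev T hT
  have hb2 : ∑ i ∈ D, ⟪block d k wstar (c i), x i - μc i⟫
      ≤ C * σ * Real.sqrt n * Real.sqrt D.card :=
    fiber_bound d k n wstar hwstar D (fun i => x i - μc i) (C*σ) hCσ hDdev c
  have hγ' : 0 ≤ 1/γ := by positivity
  calc ∑ i ∈ D, hinge d k γ wstar (x i) (y i)
      ≤ (1/γ) * ((∑ i ∈ D, ⟪block d k wstar (y i), μc i - x i⟫)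
        + ∑ i ∈ D, ⟪block d k wstar (c i), x i - μc i⟫) := hsum
    _ ≤ (1/γ) * (2 * (C * σ) * Real.sqrt n * Real.sqrt D.card) := by
        refine mul_le_mul_of_nonneg_left ?_ hγ'
        nlinarith [hb1, hb2]

lemma clean_zero {ι : Type*} (d k : ℕ) [NeZero k] (γ : ℝ) (hγ : 0 < γ)
    (wstar : EuclideanSpace ℝ (Fin k × Fin d)) (Cl : Finset ι)
    (x : ι → EuclideanSpace ℝ (Fin d)) (y : ι → Fin k)
    (hmargin : ∀ i ∈ Cl, ∀ y' : Fin k, y' ≠ y i →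
      γ ≤ ⟪block d k wstar (y i) - block d k wstar y', x i⟫) :
    ∑ i ∈ Cl, hinge d k γ wstar (x i) (y i) ≤ 0 := by
  refine Finset.sum_nonpos fun i hi => ?_
  refine hinge_le d k γ wstar (x i) (y i) 0 fun y' => ?_
  by_cases hby : y' = y i
  · simp [hby]
  · have hm := hmargin i hi y' hby
    rw [inner_sub_left] at hm
    have hγ' : 0 ≤ 1/γ := by positivity
    have hinv : (1/γ) * γ = 1 := by field_simp
    have key := mul_le_mul_of_nonneg_left hm hγ'
    rw [hinv] at key
    simp only [ne_eq, hby, not_false_iff, if_true]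
    linarith


open scoped Classical in
/-- noise rate condition — small error of the hinge minimizer under
empirical dense pancakes. -/
theorem stmt_17 {ι : Type*} [DecidableEq ι] (d k n : ℕ) [NeZero k] (hd : 0 < d) (hk : 2 ≤ k)
    (hn : 0 < n) (C σ γ τ : ℝ) (hC : 0 < C) (hσ : 0 < σ) (hγ : 0 < γ) (hτ : 0 < τ)
    (hγbig : max τ (C * σ) < γ / 4)
    (η : ℝ) (hη : η ≤ 1 / (2^12 * (k : ℝ)^2))
    (α : ℝ) (hα : α ∈ Set.Icc (0.6 / (k : ℝ)) (1 / (k : ℝ)))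
    (ε : ℝ) (hε : ε ∈ Set.Ioo (0:ℝ) 1)
    (wstar : EuclideanSpace ℝ (Fin k × Fin d)) (hwstar : ‖wstar‖ ≤ 1)
    (Cl D : Finset ι) (hClD : Disjoint Cl D)
    (hIlow : (n : ℝ) / 2 ≤ ((Cl ∪ D).card : ℝ)) (hIhigh : ((Cl ∪ D).card : ℝ) ≤ n)
    (x : ι → EuclideanSpace ℝ (Fin d)) (y : ι → Fin k)
    (hmargin : ∀ i ∈ Cl, ∀ y' : Fin k, y' ≠ y i →
      γ ≤ ⟪block d k wstar (y i) - block d k wstar y', x i⟫)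
    (hDcard : (D.card : ℝ) ≤ η * n)
    (μc : ι → EuclideanSpace ℝ (Fin d))
    (hDmargin : ∀ i ∈ D, ∀ y' : Fin k, y' ≠ y i →
      γ ≤ ⟪block d k wstar (y i) - block d k wstar y', μc i⟫)
    (hDdev : ∀ T ⊆ D, ‖∑ i ∈ T, (x i - μc i)‖ ≤ C * σ * Real.sqrt (T.card * n))
    (what : EuclideanSpace ℝ (Fin k × Fin d)) (hwhat : ‖what‖ ≤ 1)
    (hmin : ∀ w : EuclideanSpace ℝ (Fin k × Fin d), ‖w‖ ≤ 1 →
      ∑ i ∈ Cl ∪ D, hinge d k γ what (x i) (y i) ≤ ∑ i ∈ Cl ∪ D, hinge d k γ w (x i) (y i))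
    (μ : MeasureTheory.Measure (EuclideanSpace ℝ (Fin d) × Fin k))
    (hμprob : MeasureTheory.IsProbabilityMeasure μ)
    (hdense : ENNReal.ofReal (1 - ε) ≤
      μ {z | (3 * α / 20) * (((Cl ∪ D).card : ℕ) : ℝ) ≤
        ((Cl.filter fun i => (x i, y i) ∈ pancake d k what τ z.1 z.2).card : ℝ)}) :
    μ {z | ∃ y' : Fin k, ⟪block d k what z.2, z.1⟫ < ⟪block d k what y', z.1⟫}
      ≤ ENNReal.ofReal ε := by
  have hkpos : (0:ℝ) < k := by positivity
  have hτγ : τ < γ/4 := lt_of_le_of_lt (le_max_left _ _) hγbig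
  have hCσγ : C * σ < γ/4 := lt_of_le_of_lt (le_max_right _ _) hγbig
  have hCσ0 : 0 ≤ C * σ := by positivity
  set M : Set (EuclideanSpace ℝ (Fin d) × Fin k) :=
    {z | ∃ y' : Fin k, ⟪block d k what z.2, z.1⟫ < ⟪block d k what y', z.1⟫} with hM
  -- the dense set is contained in the complement of M
  have hsub : {z : EuclideanSpace ℝ (Fin d) × Fin k |
      (3 * α / 20) * (((Cl ∪ D).card : ℕ) : ℝ) ≤
        ((Cl.filter fun i => (x i, y i) ∈ pancake d k what τ z.1 z.2).card : ℝ)} ⊆ Mᶜ := by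
    intro z hz hzM
    obtain ⟨y', hy'⟩ := hzM
    set P := Cl.filter fun i => (x i, y i) ∈ pancake d k what τ z.1 z.2 with hP
    -- each pancake point has hinge loss ≥ 1/2 for what
    have hPle : ∀ i ∈ P, (1/2 : ℝ) ≤ hinge d k γ what (x i) (y i) := by
      intro i hi
      rw [hP, Finset.mem_filter] at hi
      obtain ⟨hiCl, hyi, hban⟩ := hi
      dsimp only at hyi hban
      have hne : y' ≠ y i := by
        rw [hyi]; intro h; rw [h] at hy'; exact lt_irrefl _ hy'
      refine le_trans ?_ (le_hinge d k γ what (x i) (y i) y')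
      simp only [ne_eq, hne, not_false_iff, if_true]
      have hb1 := abs_le.mp (hban z.2)
      have hb2 := abs_le.mp (hban y')
      rw [inner_sub_right] at hb1 hb2
      rw [hyi]
      have hγ' : 0 ≤ 1/γ := by positivity
      have hs : ⟪block d k what z.2, x i⟫ - ⟪block d k what y', x i⟫ ≤ γ/2 := by
        have h4 : 2*τ ≤ γ/2 := by linarith
        linarith [hb1.2, hb2.1, hy']
      have key := mul_le_mul_of_nonneg_left hs hγ'
      have hinv : (1/γ) * (γ/2) = 1/2 := by field_simp
      rw [hinv] at key
      linarith
    -- lower bound on total loss of what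
    have hcardP : (3 * α / 20) * (((Cl ∪ D).card : ℕ) : ℝ) ≤ (P.card : ℝ) := hz
    have hlow : (1/2 : ℝ) * ((3 * α / 20) * (((Cl ∪ D).card : ℕ) : ℝ))
        ≤ ∑ i ∈ Cl ∪ D, hinge d k γ what (x i) (y i) := by
      have h1 : (P.card : ℝ) * (1/2 : ℝ) ≤ ∑ i ∈ P, hinge d k γ what (x i) (y i) := by
        have := Finset.card_nsmul_le_sum P (fun i => hinge d k γ what (x i) (y i)) (1/2 : ℝ) hPle
        simpa [nsmul_eq_mul] using this
      have h2 : ∑ i ∈ P, hinge d k γ what (x i) (y i)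
          ≤ ∑ i ∈ Cl ∪ D, hinge d k γ what (x i) (y i) := by
        refine Finset.sum_le_sum_of_subset_of_nonneg ?_ (fun i _ _ => hinge_nonneg _ _ _ _ _ _)
        exact (Finset.filter_subset _ _).trans Finset.subset_union_left
      nlinarith [h1, h2, hcardP]
    -- upper bound on total loss of what via wstar
    have hupp : ∑ i ∈ Cl ∪ D, hinge d k γ what (x i) (y i)
        ≤ (1/γ) * (2 * (C * σ) * Real.sqrt n * Real.sqrt D.card) := by
      refine (hmin wstar hwstar).trans ?_
      rw [Finset.sum_union hClD]
      have h1 := clean_zero d k γ hγ wstar Cl x y hmargin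
      have h2 := dirty_sum d k n γ C σ hγ hCσ0 wstar hwstar D x μc y hDmargin hDdev
      linarith
    -- numerics
    have hη0 : 0 ≤ η := by nlinarith [hDcard, (Nat.cast_nonneg D.card : (0:ℝ) ≤ (D.card:ℝ)), (Nat.cast_pos.mpr hn : (0:ℝ) < (n:ℝ))]
    have hnpos : (0:ℝ) < n := by exact_mod_cast hn
    have hsqD : Real.sqrt (D.card : ℝ) ≤ Real.sqrt η * Real.sqrt n := by
      rw [← Real.sqrt_mul hη0]
      exact Real.sqrt_le_sqrt hDcard
    have hsqη : Real.sqrt η ≤ 1/(64*(k:ℝ)) := by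
      have he : η ≤ (1/(64*(k:ℝ)))^2 := by
        have : (1/(64*(k:ℝ)))^2 = 1 / (2^12 * (k:ℝ)^2) := by
          field_simp; ring
        rw [this]; exact hη
      calc Real.sqrt η ≤ Real.sqrt ((1/(64*(k:ℝ)))^2) := Real.sqrt_le_sqrt he
        _ = 1/(64*(k:ℝ)) := Real.sqrt_sq (by positivity)
    have hRHS : (1/γ) * (2 * (C * σ) * Real.sqrt n * Real.sqrt D.card)
        ≤ (n:ℝ) / (128 * k) := by
      have hsq : Real.sqrt (n:ℝ) * Real.sqrt (D.card : ℝ) ≤ (n:ℝ)/(64*k) := by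
        calc Real.sqrt (n:ℝ) * Real.sqrt (D.card : ℝ)
            ≤ Real.sqrt (n:ℝ) * (Real.sqrt η * Real.sqrt n) :=
              mul_le_mul_of_nonneg_left hsqD (Real.sqrt_nonneg _)
          _ = Real.sqrt η * ((n:ℝ)) := by
              rw [show Real.sqrt (n:ℝ) * (Real.sqrt η * Real.sqrt (n:ℝ))
                  = Real.sqrt (n:ℝ) * Real.sqrt (n:ℝ) * Real.sqrt η from by ring,
                Real.mul_self_sqrt (le_of_lt hnpos)]
              ring
          _ ≤ (1/(64*(k:ℝ))) * n := mul_le_mul_of_nonneg_right hsqη (le_of_lt hnpos)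
          _ = (n:ℝ)/(64*k) := by ring
      have hfac : (1/γ) * (2 * (C * σ)) ≤ 1/2 := by
        rw [div_mul_eq_mul_div, one_mul, div_le_iff₀ hγ]
        linarith
      calc (1/γ) * (2 * (C * σ) * Real.sqrt n * Real.sqrt D.card)
          = ((1/γ) * (2 * (C * σ))) * (Real.sqrt n * Real.sqrt D.card) := by ring
        _ ≤ (1/2) * ((n:ℝ)/(64*k)) := by
            apply mul_le_mul hfac hsq (by positivity) (by norm_num)
        _ = (n:ℝ)/(128*k) := by ring
    have hαlow : 0.6/(k:ℝ) ≤ α := hα.1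
    have hLB : (9:ℝ)/400 * ((n:ℝ)/k) ≤ (1/2 : ℝ) * ((3 * α / 20) * (((Cl ∪ D).card : ℕ) : ℝ)) := by
      have hα0 : 0 ≤ α := le_trans (by positivity) hαlow
      have hN0 : (0:ℝ) ≤ ((Cl ∪ D).card : ℝ) := Nat.cast_nonneg _
      calc (9:ℝ)/400 * ((n:ℝ)/k) = (1/2) * ((3 * (0.6/(k:ℝ)) / 20) * ((n:ℝ)/2)) := by ring
        _ ≤ (1/2 : ℝ) * ((3 * α / 20) * (((Cl ∪ D).card : ℕ) : ℝ)) := by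
            refine mul_le_mul_of_nonneg_left ?_ (by norm_num)
            exact mul_le_mul (by linarith) hIlow (by positivity) (by linarith)
    have hfinal : (9:ℝ)/400 * ((n:ℝ)/k) ≤ (n:ℝ)/(128*k) :=
      le_trans hLB (le_trans hlow (le_trans hupp hRHS))
    have hfinal' : (9:ℝ)/400 * ((n:ℝ)/k) ≤ ((n:ℝ)/k)/128 := by
      calc (9:ℝ)/400 * ((n:ℝ)/k) ≤ (n:ℝ)/(128*k) := hfinal
        _ = ((n:ℝ)/k)/128 := by ring
    have hkn : 0 < (n:ℝ)/k := by positivity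
    linarith
  have hMeasM : MeasurableSet M := by
    have hrepr : M = ⋃ y₀ : Fin k, ⋃ y' : Fin k,
        ({x₀ : EuclideanSpace ℝ (Fin d) | ⟪block d k what y₀, x₀⟫ < ⟪block d k what y', x₀⟫}
          ×ˢ ({y₀} : Set (Fin k))) := by
      ext z
      simp only [hM, Set.mem_setOf_eq, Set.mem_iUnion, Set.mem_prod, Set.mem_singleton_iff]
      constructor
      · rintro ⟨y', hy'⟩; exact ⟨z.2, y', hy', rfl⟩
      · rintro ⟨y₀, y', hy', hz2⟩; exact ⟨y', by rw [hz2]; exact hy'⟩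
    rw [hrepr]
    refine MeasurableSet.iUnion fun y₀ => MeasurableSet.iUnion fun y' => ?_
    refine MeasurableSet.prod ?_ (measurableSet_singleton y₀)
    exact (isOpen_lt (Continuous.inner continuous_const continuous_id)
      (Continuous.inner continuous_const continuous_id)).measurableSet
  have hcompl : ENNReal.ofReal (1 - ε) ≤ μ Mᶜ := le_trans hdense (MeasureTheory.measure_mono hsub)
  have hadd : μ M + μ Mᶜ = 1 := by
    rw [MeasureTheory.measure_add_measure_compl hMeasM, MeasureTheory.measure_univ]
  have h1 : μ M + ENNReal.ofReal (1 - ε) ≤ ENNReal.ofReal ε + ENNReal.ofReal (1 - ε) := by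
    calc μ M + ENNReal.ofReal (1 - ε) ≤ μ M + μ Mᶜ := add_le_add (le_refl _) hcompl
      _ = 1 := hadd
      _ = ENNReal.ofReal ε + ENNReal.ofReal (1 - ε) := by
          rw [← ENNReal.ofReal_add (le_of_lt hε.1) (by linarith [hε.2])]
          rw [show ε + (1 - ε) = 1 by ring, ENNReal.ofReal_one]
  exact (ENNReal.add_le_add_iff_right ENNReal.ofReal_ne_top).mp h1
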